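/- Let T be a linear operator on L²(𝕋) with ‖T‖_{L∞→L∞} ≤ 1 and ‖Tf‖₂ ≤ (1−γ)‖f‖₂ whenever f is orthogonal to the span V of {e(nθ) : |n| < K}, where 0 < γ < 1. Then for all m ≥ 1 and all f ∈ L²(𝕋), ‖T^m f‖₂ ≤ (√(2K)/γ + 1)·‖f‖₂. -/

import Mathlib

open MeasureTheory AddCircle
open scoped InnerProductSpace ComplexConjugate

instance : Fact ((0 : ℝ) < 1) := ⟨one_pos⟩

private lemma stmt8_coe_sum_ae (s : Finset ℤ) (c : ℤ → ℂ) :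
    (↑↑(∑ n ∈ s, c n • fourierLp (T := 1) 2 n) : AddCircle (1:ℝ) → ℂ)
      =ᵐ[haarAddCircle (T := 1)] fun x => ∑ n ∈ s, c n • fourier n x := by
  classical
  induction s using Finset.induction with
  | empty => simp only [Finset.sum_empty]; exact Lp.coeFn_zero ℂ 2 _
  | @insert a t ha ih =>
      have h1 := Lp.coeFn_add (c a • fourierLp (T := 1) 2 a)
        (∑ n ∈ t, c n • fourierLp (T := 1) 2 n)
      have h2 := Lp.coeFn_smul (c a) (fourierLp (T := 1) 2 a)
      have h3 := coeFn_fourierLp (T := 1) 2 a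
      rw [Finset.sum_insert ha]
      filter_upwards [h1, h2, h3, ih] with x h1 h2 h3 h4
      simp only [h1, Pi.add_apply, h2, Pi.smul_apply, h3, h4, Finset.sum_insert ha]

set_option maxHeartbeats 1000000 in
/-- Let `T` be a linear operator on `L²(𝕋)` which is an `L∞`-contraction and
contracts by a factor `1-γ` on the orthogonal complement of
`V = span{e(nθ) : |n| < K}`.  Then `‖T^m f‖₂ ≤ (√(2K)/γ + 1)‖f‖₂` for all
`m ≥ 1` and all `f ∈ L²(𝕋)`. -/
theorem stmt8 (K : ℕ) (γ : ℝ) (hγ0 : 0 < γ) (hγ1 : γ < 1)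
    (T : Lp ℂ 2 (haarAddCircle (T := 1)) →ₗ[ℂ] Lp ℂ 2 (haarAddCircle (T := 1)))
    (hTinf : ∀ f : Lp ℂ 2 (haarAddCircle (T := 1)),
      eLpNorm (↑↑(T f)) ⊤ (haarAddCircle (T := 1)) ≤
        eLpNorm (↑↑f) ⊤ (haarAddCircle (T := 1)))
    (V : Submodule ℂ (Lp ℂ 2 (haarAddCircle (T := 1))))
    (hV : V = Submodule.span ℂ {g | ∃ n : ℤ, |n| < (K : ℤ) ∧ g = fourierLp 2 n})
    (hTgap : ∀ f ∈ Vᗮ, ‖T f‖ ≤ (1 - γ) * ‖f‖) :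
    ∀ m : ℕ, 1 ≤ m → ∀ f : Lp ℂ 2 (haarAddCircle (T := 1)),
      ‖(T ^ m) f‖ ≤ (Real.sqrt (2 * K) / γ + 1) * ‖f‖ := by
  classical
  subst hV
  set S : ℝ := Real.sqrt (2 * K) with hSdef
  have hS0 : 0 ≤ S := Real.sqrt_nonneg _
  set s : Finset ℤ := Finset.Ioo (-(K : ℤ)) (K : ℤ) with hsdef
  set e : ℤ → Lp ℂ 2 (haarAddCircle (T := 1)) := fourierLp 2 with hedef
  have he : Orthonormal ℂ e := orthonormal_fourier
  -- the projection
  set P : Lp ℂ 2 (haarAddCircle (T := 1)) → Lp ℂ 2 (haarAddCircle (T := 1)) :=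
    fun g => ∑ n ∈ s, (⟪e n, g⟫_ℂ) • e n with hPdef
  have hcard : (s.card : ℝ) ≤ 2 * K := by
    have : s.card = ((K : ℤ) - (-(K : ℤ)) - 1).toNat := Int.card_Ioo _ _
    rw [this]
    have : ((K : ℤ) - (-(K : ℤ)) - 1).toNat ≤ 2 * K := by omega
    exact_mod_cast this
  -- P g is in the span
  have hPmem : ∀ g, P g ∈ Submodule.span ℂ
      {g | ∃ n : ℤ, |n| < (K : ℤ) ∧ g = fourierLp 2 n} := by
    intro g
    refine Submodule.sum_mem _ fun n hn => Submodule.smul_mem _ _ (Submodule.subset_span ?_)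
    rw [hsdef, Finset.mem_Ioo] at hn
    exact ⟨n, abs_lt.mpr ⟨hn.1, hn.2⟩, rfl⟩
  -- g - P g is orthogonal to the span
  have hQmem : ∀ g, g - P g ∈ (Submodule.span ℂ
      {g | ∃ n : ℤ, |n| < (K : ℤ) ∧ g = fourierLp 2 n})ᗮ := by
    intro g
    rw [Submodule.mem_orthogonal]
    intro u hu
    induction hu using Submodule.span_induction with
    | mem x hx =>
        obtain ⟨n, hn, rfl⟩ := hx
        have hns : n ∈ s := by rw [hsdef, Finset.mem_Ioo]; exact abs_lt.mp hn
        have : ⟪e n, P g⟫_ℂ = ⟪e n, g⟫_ℂ := he.inner_right_sum _ hns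
        rw [inner_sub_right]
        show ⟪e n, g⟫_ℂ - ⟪e n, P g⟫_ℂ = 0
        rw [this, sub_self]
    | zero => exact inner_zero_left _
    | add x y hx hy ihx ihy => rw [inner_add_left, ihx, ihy, add_zero]
    | smul a x hx ihx => rw [inner_smul_left, ihx, mul_zero]
  -- Pythagoras
  have hPg_le : ∀ g, ‖P g‖ ≤ ‖g‖ ∧ ‖g - P g‖ ≤ ‖g‖ := by
    intro g
    have horth : ⟪P g, g - P g⟫_ℂ = 0 :=
      Submodule.inner_right_of_mem_orthogonal (hPmem g) (hQmem g)
    have hpyth : ‖g‖ ^ 2 = ‖P g‖ ^ 2 + ‖g - P g‖ ^ 2 := by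
      have : P g + (g - P g) = g := by abel
      rw [← this, @norm_add_sq ℂ, horth]
      simp
    constructor
    · nlinarith [norm_nonneg (P g), norm_nonneg g, norm_nonneg (g - P g)]
    · nlinarith [norm_nonneg (P g), norm_nonneg g, norm_nonneg (g - P g)]
  -- norm of P g via coefficients
  have hPnormsq : ∀ g, ‖P g‖ ^ 2 = ∑ n ∈ s, ‖⟪e n, g⟫_ℂ‖ ^ 2 := by
    intro g
    have h1 : ⟪P g, P g⟫_ℂ = ∑ n ∈ s, conj (⟪e n, g⟫_ℂ) * ⟪e n, g⟫_ℂ :=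
      he.inner_sum _ _ _
    have h4 : ‖P g‖ ^ 2 = RCLike.re ⟪P g, P g⟫_ℂ :=
      (inner_self_eq_norm_sq (𝕜 := ℂ) (P g)).symm
    rw [h4, h1, map_sum]
    refine Finset.sum_congr rfl fun n _ => ?_
    rw [RCLike.conj_mul, ← RCLike.ofReal_pow, RCLike.ofReal_re]
  -- sum of absolute values of coefficients
  have hsum_abs : ∀ g, ∑ n ∈ s, ‖⟪e n, g⟫_ℂ‖ ≤ S * ‖g‖ := by
    intro g
    have h1 : (∑ n ∈ s, ‖⟪e n, g⟫_ℂ‖) ^ 2 ≤ (s.card : ℝ) * ∑ n ∈ s, ‖⟪e n, g⟫_ℂ‖ ^ 2 := by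
      have := sq_sum_le_card_mul_sum_sq (s := s) (f := fun n => ‖⟪e n, g⟫_ℂ‖)
      exact_mod_cast this
    have h2 : (∑ n ∈ s, ‖⟪e n, g⟫_ℂ‖ ^ 2) = ‖P g‖ ^ 2 := (hPnormsq g).symm
    have h3 : (∑ n ∈ s, ‖⟪e n, g⟫_ℂ‖) ^ 2 ≤ (2 * K) * ‖g‖ ^ 2 := by
      rw [h2] at h1
      have hP := (hPg_le g).1
      have hPsq : ‖P g‖ ^ 2 ≤ ‖g‖ ^ 2 := by
        nlinarith [norm_nonneg (P g), norm_nonneg g]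
      calc (∑ n ∈ s, ‖⟪e n, g⟫_ℂ‖) ^ 2 ≤ (s.card : ℝ) * ‖P g‖ ^ 2 := h1
        _ ≤ (2 * K) * ‖g‖ ^ 2 := by
            nlinarith [Nat.cast_nonneg (α := ℝ) s.card, sq_nonneg ‖P g‖]
    have hsum0 : 0 ≤ ∑ n ∈ s, ‖⟪e n, g⟫_ℂ‖ :=
      Finset.sum_nonneg fun _ _ => norm_nonneg _
    have hSsq : S ^ 2 = 2 * K := Real.sq_sqrt (by positivity)
    nlinarith [mul_nonneg hS0 (norm_nonneg g)]
  -- essup bound on P g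
  have hPinf : ∀ g, eLpNorm (↑↑(P g)) ⊤ (haarAddCircle (T := 1)) ≤
      ENNReal.ofReal (∑ n ∈ s, ‖⟪e n, g⟫_ℂ‖) := by
    intro g
    have hae := stmt8_coe_sum_ae s (fun n => ⟪e n, g⟫_ℂ)
    have hb : ∀ᵐ x ∂(haarAddCircle (T := 1)), ‖(↑↑(P g) : AddCircle (1:ℝ) → ℂ) x‖ ≤
        ∑ n ∈ s, ‖⟪e n, g⟫_ℂ‖ := by
      filter_upwards [hae] with x hx
      rw [hPdef]
      simp only
      rw [hx]
      refine (norm_sum_le _ _).trans ?_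
      refine Finset.sum_le_sum fun n _ => ?_
      rw [norm_smul]
      have : ‖fourier n x‖ = 1 := Circle.norm_coe _
      rw [this, mul_one]
    have := eLpNorm_le_of_ae_bound (p := (⊤ : ENNReal)) hb
    simpa using this
  -- pass essup norms through powers of T
  have hTpow : ∀ (k : ℕ) (g : Lp ℂ 2 (haarAddCircle (T := 1))),
      eLpNorm (↑↑((T ^ k) g)) ⊤ (haarAddCircle (T := 1)) ≤
        eLpNorm (↑↑g) ⊤ (haarAddCircle (T := 1)) := by
    intro k
    induction k with
    | zero => intro g; rw [pow_zero, Module.End.one_apply]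
    | succ k ih =>
        intro g
        rw [pow_succ, Module.End.mul_apply]
        exact (ih (T g)).trans (hTinf g)
  -- from essup bound to L2 norm bound
  have hnorm_le : ∀ (g : Lp ℂ 2 (haarAddCircle (T := 1))) (C : ℝ), 0 ≤ C →
      eLpNorm (↑↑g) ⊤ (haarAddCircle (T := 1)) ≤ ENNReal.ofReal C → ‖g‖ ≤ C := by
    intro g C hC h
    rw [Lp.norm_def]
    refine ENNReal.toReal_le_of_le_ofReal hC ?_
    exact (eLpNorm_le_eLpNorm_of_exponent_le le_top (Lp.aestronglyMeasurable g)).trans h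
  -- main induction
  have key : ∀ (m : ℕ) (g : Lp ℂ 2 (haarAddCircle (T := 1))),
      ‖(T ^ m) g‖ ≤ (S / γ + 1) * ‖g‖ := by
    intro m
    induction m with
    | zero =>
        intro g
        rw [pow_zero, Module.End.one_apply]
        have h1 : 0 ≤ S / γ := by positivity
        nlinarith [norm_nonneg g]
    | succ m ih =>
        intro g
        have hsplit : (T ^ (m + 1)) g = (T ^ (m + 1)) (P g) + (T ^ (m + 1)) (g - P g) := by
          rw [← map_add]
          congr 1
          abel
        -- first term
        have hterm1 : ‖(T ^ (m + 1)) (P g)‖ ≤ S * ‖g‖ := by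
          refine hnorm_le _ _ (by positivity) ?_
          refine (hTpow (m + 1) (P g)).trans ?_
          refine (hPinf g).trans ?_
          exact ENNReal.ofReal_le_ofReal (hsum_abs g)
        -- second term
        have hterm2 : ‖(T ^ (m + 1)) (g - P g)‖ ≤ (S / γ + 1) * ((1 - γ) * ‖g‖) := by
          rw [pow_succ, Module.End.mul_apply]
          refine (ih (T (g - P g))).trans ?_
          have h1 : ‖T (g - P g)‖ ≤ (1 - γ) * ‖g - P g‖ := hTgap _ (hQmem g)
          have h2 : ‖g - P g‖ ≤ ‖g‖ := (hPg_le g).2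
          have h3 : (0 : ℝ) ≤ S / γ + 1 := by positivity
          have h4 : (0 : ℝ) ≤ 1 - γ := by linarith
          have h5 : ‖T (g - P g)‖ ≤ (1 - γ) * ‖g‖ :=
            h1.trans (mul_le_mul_of_nonneg_left h2 h4)
          exact mul_le_mul_of_nonneg_left h5 h3
        have htot : ‖(T ^ (m + 1)) g‖ ≤ S * ‖g‖ + (S / γ + 1) * ((1 - γ) * ‖g‖) := by
          rw [hsplit]
          exact (norm_add_le _ _).trans (add_le_add hterm1 hterm2)
        have hdiv : S / γ * γ = S := div_mul_cancel₀ S (ne_of_gt hγ0)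
        nlinarith [norm_nonneg g, mul_nonneg hγ0.le (norm_nonneg g)]
  intro m _ f
  exact key m f
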